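/- Fix real numbers P_p > 0, λ_p > 0, σ > 0, λ_s > 0, α > 2 and an integer N ≥ 2. With p(ρ) = exp(−λ_s π ρ²/N), q(ρ) = 1 − p(ρ), and S(ρ) = Σ_{M=1}^{N} (N/M)² C(N−1, M−1) p(ρ)^{N−M} q(ρ)^{M}, the function ρ ↦ λ_p P_p² σ² π [ ρ^{2−2α} p(ρ)^N/(α−1) + ((α − ρ^{2−2α})/((α−1) q(ρ)) + ρ^{2−2α}/(α−1)) S(ρ) ] tends to λ_p P_p² σ² π α/(α−1) as ρ → ∞. (Part of Corollary 3: the AD-WPT received-power variance converges to the omnidirectional value as the charging radius grows.) -/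

import Mathlib

open Filter Real

theorem stmt_14 (Pp lp σ ls α : ℝ) (N : ℕ)
    (hPp : 0 < Pp) (hlp : 0 < lp) (hσ : 0 < σ) (hls : 0 < ls) (hα : 2 < α) (hN : 2 ≤ N) :
    Filter.Tendsto
      (fun ρ : ℝ =>
        let p : ℝ := Real.exp (-(ls * Real.pi * ρ ^ 2 / N));
        let q : ℝ := 1 - p;
        let S : ℝ := ∑ M ∈ Finset.Icc 1 N,
          ((N : ℝ) / (M : ℝ)) ^ 2 * (Nat.choose (N - 1) (M - 1) : ℝ) * p ^ (N - M) * q ^ M;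
        lp * Pp ^ 2 * σ ^ 2 * Real.pi *
          (ρ ^ (2 - 2 * α) * p ^ N / (α - 1) +
            ((α - ρ ^ (2 - 2 * α)) / ((α - 1) * q) + ρ ^ (2 - 2 * α) / (α - 1)) * S))
      Filter.atTop
      (nhds (lp * Pp ^ 2 * σ ^ 2 * Real.pi * α / (α - 1))) := by
  have hα1 : α - 1 ≠ 0 := by linarith
  have hN0 : (0:ℝ) < N := by exact_mod_cast (by omega : 0 < N)
  set g : ℝ → ℝ := fun x => ∑ M ∈ Finset.Icc 1 N,
      ((N : ℝ) / (M : ℝ)) ^ 2 * (Nat.choose (N - 1) (M - 1) : ℝ) * x ^ (N - M) * (1 - x) ^ M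
    with hg_def
  have hg0 : g 0 = 1 := by
    simp only [hg_def]
    rw [Finset.sum_eq_single_of_mem N (Finset.mem_Icc.mpr ⟨by omega, le_refl N⟩)]
    · simp [div_self hN0.ne']
    · intro M hM hMN
      have hM' := (Finset.mem_Icc.mp hM).2
      simp [zero_pow (by omega : N - M ≠ 0)]
  have hgc : Tendsto g (nhds 0) (nhds 1) := by
    rw [← hg0]
    exact (Continuous.tendsto (by fun_prop) 0)
  have hp : Tendsto (fun ρ : ℝ => Real.exp (-(ls * Real.pi * ρ ^ 2 / N))) atTop (nhds 0) := by
    apply Real.tendsto_exp_atBot.comp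
    apply tendsto_neg_atTop_atBot.comp
    have hc : 0 < ls * Real.pi / N := by positivity
    have h := (tendsto_pow_atTop (two_ne_zero)).const_mul_atTop hc
    exact h.congr fun ρ => by ring
  have hr : Tendsto (fun ρ : ℝ => ρ ^ (2 - 2 * α)) atTop (nhds 0) := by
    have h := tendsto_rpow_neg_atTop (show (0:ℝ) < 2 * α - 2 by linarith)
    simpa [neg_sub] using h
  have h1 : Tendsto (fun ρ : ℝ => ρ ^ (2 - 2 * α) *
      (Real.exp (-(ls * Real.pi * ρ ^ 2 / N))) ^ N / (α - 1)) atTop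
      (nhds (0 * (0:ℝ) ^ N / (α - 1))) := (hr.mul (hp.pow N)).div_const _
  have hq : Tendsto (fun ρ : ℝ => 1 - Real.exp (-(ls * Real.pi * ρ ^ 2 / N))) atTop
      (nhds (1 - 0)) := tendsto_const_nhds.sub hp
  have h2 : Tendsto (fun ρ : ℝ => (α - ρ ^ (2 - 2 * α)) /
      ((α - 1) * (1 - Real.exp (-(ls * Real.pi * ρ ^ 2 / N))))) atTop
      (nhds ((α - 0) / ((α - 1) * (1 - 0)))) :=
    (tendsto_const_nhds.sub hr).div (tendsto_const_nhds.mul hq) (by simp [hα1])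
  have h3 : Tendsto (fun ρ : ℝ => ρ ^ (2 - 2 * α) / (α - 1)) atTop
      (nhds ((0:ℝ) / (α - 1))) := hr.div_const _
  have hS : Tendsto (fun ρ : ℝ => g (Real.exp (-(ls * Real.pi * ρ ^ 2 / N)))) atTop
      (nhds 1) := hgc.comp hp
  have key := (tendsto_const_nhds (x := lp * Pp ^ 2 * σ ^ 2 * Real.pi)).mul
      (h1.add (((h2.add h3).mul hS)))
  have hVeq : lp * Pp ^ 2 * σ ^ 2 * Real.pi *
      (0 * (0:ℝ) ^ N / (α - 1) + ((α - 0) / ((α - 1) * (1 - 0)) + 0 / (α - 1)) * 1)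
      = lp * Pp ^ 2 * σ ^ 2 * Real.pi * α / (α - 1) := by
    field_simp
    ring
  rw [hVeq] at key
  exact key
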